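/- Let V be a finite-dimensional real vector space and let ω₁, ω₂, ω₃ be nondegenerate alternating bilinear forms on V with recursion operators A₁, A₂, A₃ (defined by ω_i(x,y) = ω_{i+1}(A_{i+2} x, y), indices mod 3) satisfying A₁² = −Id and A₂² = A₃² = Id, and let g(x,y) := ω₁(x, A₁ y) be the associated symmetric nondegenerate bilinear form. Then g has neutral signature: there exist subspaces P and N of V with V = P ⊕ N, dim P = dim N, g positive definite on P, and g negative definite on N. -/

import Mathlib

/-- For a hypersymplectic structure (`A₁² = -Id`, `A₂² = A₃² = Id`), the
associated symmetric nondegenerate bilinear form `g(x,y) := ω₁(x, A₁ y)` has neutral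
signature: there are complementary subspaces `P`, `N` of equal dimension on which `g` is
positive definite and negative definite respectively. -/
theorem hypersymplectic_metric_neutral_signature
    (V : Type*) [AddCommGroup V] [Module ℝ V] [FiniteDimensional ℝ V]
    (ω₁ ω₂ ω₃ : V →ₗ[ℝ] V →ₗ[ℝ] ℝ)
    (h₁_alt : ∀ x : V, ω₁ x x = 0) (h₂_alt : ∀ x : V, ω₂ x x = 0)
    (h₃_alt : ∀ x : V, ω₃ x x = 0)
    (h₁_nd : ∀ x : V, (∀ y : V, ω₁ x y = 0) → x = 0)
    (h₂_nd : ∀ x : V, (∀ y : V, ω₂ x y = 0) → x = 0)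
    (h₃_nd : ∀ x : V, (∀ y : V, ω₃ x y = 0) → x = 0)
    (A₁ A₂ A₃ : V →ₗ[ℝ] V)
    (hA₃ : ∀ x y : V, ω₁ x y = ω₂ (A₃ x) y)
    (hA₁ : ∀ x y : V, ω₂ x y = ω₃ (A₁ x) y)
    (hA₂ : ∀ x y : V, ω₃ x y = ω₁ (A₂ x) y)
    (hA₁2 : A₁ ∘ₗ A₁ = -LinearMap.id)
    (hA₂2 : A₂ ∘ₗ A₂ = LinearMap.id)
    (hA₃2 : A₃ ∘ₗ A₃ = LinearMap.id) :
    ∃ P N : Submodule ℝ V, IsCompl P N ∧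
      Module.finrank ℝ P = Module.finrank ℝ N ∧
      (∀ x ∈ P, x ≠ 0 → 0 < ω₁ x (A₁ x)) ∧
      (∀ x ∈ N, x ≠ 0 → ω₁ x (A₁ x) < 0) := by
  classical
  have hA₁2' : ∀ x : V, A₁ (A₁ x) = -x := fun x => by
    have := congrArg (fun f => f x) hA₁2; simpa using this
  have hA₂2' : ∀ x : V, A₂ (A₂ x) = x := fun x => by
    have := congrArg (fun f => f x) hA₂2; simpa using this
  have hA₃2' : ∀ x : V, A₃ (A₃ x) = x := fun x => by
    have := congrArg (fun f => f x) hA₃2; simpa using this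
  -- skew-symmetry of the alternating forms
  have skew : ∀ (ω : V →ₗ[ℝ] V →ₗ[ℝ] ℝ), (∀ x : V, ω x x = 0) →
      ∀ x y : V, ω x y = - ω y x := by
    intro ω halt x y
    have h := halt (x + y)
    simp only [map_add, LinearMap.add_apply, halt x, halt y] at h
    linarith
  have skew₁ := skew ω₁ h₁_alt
  have skew₂ := skew ω₂ h₂_alt
  have skew₃ := skew ω₃ h₃_alt
  -- composite identity A₃ ∘ A₂ ∘ A₁ = id
  have h321 : ∀ x : V, A₃ (A₂ (A₁ x)) = x := by
    intro x
    have key : ∀ y : V, ω₂ (A₃ (A₂ (A₁ x)) - x) y = 0 := by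
      intro y
      have e1 : ω₂ (A₃ (A₂ (A₁ x))) y = ω₁ (A₂ (A₁ x)) y := (hA₃ _ y).symm
      have e2 : ω₁ (A₂ (A₁ x)) y = ω₃ (A₁ x) y := (hA₂ _ y).symm
      have e3 : ω₃ (A₁ x) y = ω₂ x y := (hA₁ _ y).symm
      simp only [map_sub, LinearMap.sub_apply, e1, e2, e3, sub_self]
    have := h₂_nd _ key
    exact sub_eq_zero.mp this
  have h21 : ∀ x : V, A₂ (A₁ x) = A₃ x := by
    intro x
    have := congrArg A₃ (h321 x)
    rwa [hA₃2'] at this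
  have h31 : ∀ x : V, A₃ (A₁ x) = - A₂ x := by
    intro x
    have := h21 (A₁ x)
    rw [hA₁2'] at this
    rw [← this, map_neg]
  -- the metric g and its basic properties
  set G : V →ₗ[ℝ] V →ₗ[ℝ] ℝ := ω₁.compl₂ A₁ with hG
  have hGapp : ∀ x y : V, G x y = ω₁ x (A₁ y) := fun x y => rfl
  -- g(x,y) = ω₂(A₂ y, x)
  have key : ∀ x y : V, G x y = ω₂ (A₂ y) x := by
    intro x y
    rw [hGapp, skew₁ x (A₁ y), hA₃ (A₁ y) x, h31 y]
    simp only [map_neg, LinearMap.neg_apply, neg_neg]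
  have gsymm : ∀ x y : V, G x y = G y x := by
    intro x y
    rw [key x y, skew₂ (A₂ y) x, hA₁ x (A₂ y), skew₃ (A₁ x) (A₂ y), hA₂ (A₂ y) (A₁ x),
      hA₂2', neg_neg]
    rfl
  have ganti : ∀ x y : V, G (A₂ x) (A₂ y) = - G x y := by
    intro x y
    rw [key (A₂ x) (A₂ y), hA₂2', skew₂ y (A₂ x), ← key y x, gsymm y x]
  -- nondegeneracy of g
  have gnd : ∀ x : V, (∀ y : V, G x y = 0) → x = 0 := by
    intro x hx
    refine h₁_nd x fun z => ?_
    have := hx (-(A₁ z))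
    rw [hGapp, map_neg, hA₁2', neg_neg] at this
    exact this
  -- orthogonal basis for g
  have gIsSymm : G.IsSymm := ⟨fun x y => gsymm x y⟩
  obtain ⟨v, hv'⟩ := LinearMap.BilinForm.exists_orthogonal_basis gIsSymm
  have hv : ∀ i j, i ≠ j → G (v i) (v j) = 0 := fun i j h => hv' h
  have hdiag : ∀ i, G (v i) (v i) ≠ 0 := by
    intro i hzero
    refine v.ne_zero i (gnd (v i) fun y => ?_)
    have hy := v.linearCombination_repr y
    rw [← hy, Finsupp.linearCombination_apply, Finsupp.sum, map_sum]
    refine Finset.sum_eq_zero fun j _ => ?_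
    rw [map_smul, smul_eq_mul]
    rcases eq_or_ne i j with rfl | hij
    · rw [hzero, mul_zero]
    · rw [hv i j hij, mul_zero]
  clear hv'
  -- quadratic form as a diagonal sum
  have hquad : ∀ x : V, G x x = ∑ i, (v.repr x i) * (v.repr x i) * G (v i) (v i) := by
    intro x
    conv_lhs => rw [← v.sum_repr x]
    simp only [map_sum, LinearMap.sum_apply, map_smul, LinearMap.smul_apply, smul_eq_mul]
    refine Finset.sum_congr rfl fun i _ => ?_
    rw [Finset.sum_eq_single i]
    · ring
    · intro j _ hji
      rw [hv j i hji]; ring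
    · intro h; exact absurd (Finset.mem_univ i) h
  -- the positive and negative index sets
  set S : Set (Fin (Module.finrank ℝ V)) := {i | 0 < G (v i) (v i)} with hS
  set P : Submodule ℝ V := Submodule.span ℝ (v '' S) with hP
  set N : Submodule ℝ V := Submodule.span ℝ (v '' Sᶜ) with hN
  -- positive definiteness on P
  have hPpos : ∀ x ∈ P, x ≠ 0 → 0 < G x x := by
    intro x hx hx0
    have hsupp : ↑(v.repr x).support ⊆ S := v.mem_span_image.mp hx
    rw [hquad x]
    refine Finset.sum_pos' (fun i _ => ?_) ?_
    · rcases eq_or_ne (v.repr x i) 0 with h | h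
      · rw [h]; simp
      · have hi : i ∈ S := hsupp (Finsupp.mem_support_iff.mpr h)
        have hd : (0:ℝ) < G (v i) (v i) := hi
        exact mul_nonneg (mul_self_nonneg _) hd.le
    · have : v.repr x ≠ 0 := fun h => hx0 (by
        have := v.linearCombination_repr x
        rw [h] at this; simpa using this.symm)
      obtain ⟨i, hi⟩ := Finsupp.ne_iff.mp this
      simp only [Finsupp.coe_zero, Pi.zero_apply] at hi
      refine ⟨i, Finset.mem_univ i, ?_⟩
      have hiS : i ∈ S := hsupp (Finsupp.mem_support_iff.mpr hi)
      have hd : (0:ℝ) < G (v i) (v i) := hiS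
      exact mul_pos (mul_self_pos.mpr hi) hd
  -- negative definiteness on N
  have hNneg : ∀ x ∈ N, x ≠ 0 → G x x < 0 := by
    intro x hx hx0
    have hsupp : ↑(v.repr x).support ⊆ Sᶜ := v.mem_span_image.mp hx
    rw [hquad x]
    have : (0:ℝ) < ∑ i, (v.repr x i) * (v.repr x i) * (- G (v i) (v i)) := by
      refine Finset.sum_pos' (fun i _ => ?_) ?_
      · rcases eq_or_ne (v.repr x i) 0 with h | h
        · rw [h]; simp
        · have hi : i ∈ Sᶜ := hsupp (Finsupp.mem_support_iff.mpr h)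
          have hd : G (v i) (v i) < 0 :=
            lt_of_le_of_ne (not_lt.mp hi) (hdiag i)
          exact mul_nonneg (mul_self_nonneg _) (by linarith)
      · have hne : v.repr x ≠ 0 := fun h => hx0 (by
          have := v.linearCombination_repr x
          rw [h] at this; simpa using this.symm)
        obtain ⟨i, hi⟩ := Finsupp.ne_iff.mp hne
        simp only [Finsupp.coe_zero, Pi.zero_apply] at hi
        refine ⟨i, Finset.mem_univ i, ?_⟩
        have hiS : i ∈ Sᶜ := hsupp (Finsupp.mem_support_iff.mpr hi)
        have hd : G (v i) (v i) < 0 := lt_of_le_of_ne (not_lt.mp hiS) (hdiag i)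
        exact mul_pos (mul_self_pos.mpr hi) (by linarith)
    have hsum : ∑ i, (v.repr x i) * (v.repr x i) * (- G (v i) (v i))
        = - ∑ i, (v.repr x i) * (v.repr x i) * G (v i) (v i) := by
      rw [← Finset.sum_neg_distrib]
      exact Finset.sum_congr rfl fun i _ => by ring
    rw [hsum] at this
    linarith
  -- P and N are complementary
  have hcompl : IsCompl P N := by
    constructor
    · rw [disjoint_iff]
      refine (Submodule.eq_bot_iff _).mpr fun x hx => ?_
      have h1 : ↑(v.repr x).support ⊆ S := v.mem_span_image.mp hx.1
      have h2 : ↑(v.repr x).support ⊆ Sᶜ := v.mem_span_image.mp hx.2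
      have hempty : (v.repr x).support = ∅ := by
        by_contra h
        obtain ⟨i, hi⟩ := Finset.nonempty_of_ne_empty h
        exact (h2 hi) (h1 hi)
      have : v.repr x = 0 := Finsupp.support_eq_empty.mp hempty
      have hx' := v.linearCombination_repr x
      rw [this] at hx'
      simpa using hx'.symm
    · rw [codisjoint_iff, hP, hN, ← Submodule.span_union, ← Set.image_union,
        Set.union_compl_self, Set.image_univ, v.span_eq]
  -- A₂ as a linear equivalence
  let e : V ≃ₗ[ℝ] V := LinearEquiv.ofLinear A₂ A₂ hA₂2 hA₂2
  -- any subspace on which G is negative definite injects dimension-wise opposite P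
  have dimle : ∀ (W₁ W₂ : Submodule ℝ V), (∀ x ∈ W₁, x ≠ 0 → 0 < G x x) →
      (∀ x ∈ W₂, x ≠ 0 → G x x < 0) →
      Module.finrank ℝ W₁ + Module.finrank ℝ W₂ ≤ Module.finrank ℝ V := by
    intro W₁ W₂ hpos hneg
    have hdisj : W₁ ⊓ W₂ = ⊥ := by
      refine (Submodule.eq_bot_iff _).mpr fun x hx => ?_
      by_contra hx0
      exact absurd (hpos x hx.1 hx0) (not_lt.mpr (le_of_lt (hneg x hx.2 hx0)))
    have := Submodule.finrank_sup_add_finrank_inf_eq W₁ W₂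
    rw [hdisj, finrank_bot, add_zero] at this
    rw [← this]
    exact Submodule.finrank_le _
  have hA₂P : ∀ x ∈ P.map A₂, x ≠ 0 → G x x < 0 := by
    rintro _ ⟨x, hx, rfl⟩ h0
    have hx0 : x ≠ 0 := fun h => h0 (by rw [h, map_zero])
    have := hPpos x hx hx0
    rw [ganti]
    linarith
  have hA₂N : ∀ x ∈ N.map A₂, x ≠ 0 → 0 < G x x := by
    rintro _ ⟨x, hx, rfl⟩ h0
    have hx0 : x ≠ 0 := fun h => h0 (by rw [h, map_zero])
    have := hNneg x hx hx0
    rw [ganti]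
    linarith
  have hmapP : Module.finrank ℝ (P.map A₂) = Module.finrank ℝ P :=
    LinearEquiv.finrank_map_eq e P
  have hmapN : Module.finrank ℝ (N.map A₂) = Module.finrank ℝ N :=
    LinearEquiv.finrank_map_eq e N
  have htot : Module.finrank ℝ P + Module.finrank ℝ N = Module.finrank ℝ V :=
    Submodule.finrank_add_eq_of_isCompl hcompl
  have h1 := dimle P (P.map A₂) hPpos hA₂P
  have h2 := dimle (N.map A₂) N hA₂N hNneg
  rw [hmapP] at h1
  rw [hmapN] at h2
  have hdim : Module.finrank ℝ P = Module.finrank ℝ N := by omega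
  exact ⟨P, N, hcompl, hdim, hPpos, hNneg⟩
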